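/- arXiv:1804.03062 — 2 statements merged into one kernel-verified Lean document; each statement's English description precedes it below -/
import Mathlib

section
/- If γx = 0 (W independent of X), βxw = 0, and βx ≥ 0, then the marginal effect β(x) satisfies 0 ≤ β(x) ≤ βx for all x; more generally, if γx = 0 and βx and βxw are both nonnegative, then β(x) ≥ 0 for all x (no effect reversal upon marginalization over W). -/
noncomputable def expit (t : ℝ) : ℝ := Real.exp t / (1 + Real.exp t)

/-- `P(Y=1 | X=x, W=w)` under the logistic model. -/
noncomputable def pY (β0 βx βw βxw x w : ℝ) : ℝ := expit (β0 + βx * x + βw * w + βxw * x * w)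

/-- `P(W=1 | X=x)` under the logistic model. -/
noncomputable def pW (γ0 γx x : ℝ) : ℝ := expit (γ0 + γx * x)

/-- joint conditional probability `P(Y=y, W=w | X=x)` induced by the two logistic models. -/
noncomputable def jnt (β0 βx βw βxw γ0 γx x : ℝ) (y w : Bool) : ℝ :=
  (if y then pY β0 βx βw βxw x (if w then 1 else 0)
   else 1 - pY β0 βx βw βxw x (if w then 1 else 0)) *
  (if w then pW γ0 γx x else 1 - pW γ0 γx x)

/-- `P(W=w | Y=y, X=x)` obtained via Bayes' theorem. -/
noncomputable def pWgYX (β0 βx βw βxw γ0 γx x : ℝ) (y w : Bool) : ℝ :=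
  jnt β0 βx βw βxw γ0 γx x y w /
    (jnt β0 βx βw βxw γ0 γx x y true + jnt β0 βx βw βxw γ0 γx x y false)

/-- marginal (over `W`) probability `P(Y=y | X=x)`. -/
noncomputable def pYgX (β0 βx βw βxw γ0 γx x : ℝ) (y : Bool) : ℝ :=
  jnt β0 βx βw βxw γ0 γx x y true + jnt β0 βx βw βxw γ0 γx x y false

/-- `g_y(x)`, the conditional log odds of `W` given `Y=y, X=x`. -/
noncomputable def g (β0 βx βw βxw γ0 γx : ℝ) (y : Bool) (x : ℝ) : ℝ :=
  Real.log (pWgYX β0 βx βw βxw γ0 γx x y true / pWgYX β0 βx βw βxw γ0 γx x y false)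

/-- the marginal log odds of `Y` given `X=x`. -/
noncomputable def margLogit (β0 βx βw βxw γ0 γx : ℝ) (x : ℝ) : ℝ :=
  Real.log (pYgX β0 βx βw βxw γ0 γx x true / pYgX β0 βx βw βxw γ0 γx x false)

/-- `β(x)`, the marginal log-odds effect of `X` on `Y`. -/
noncomputable def betaMarg (β0 βx βw βxw γ0 γx : ℝ) (x : ℝ) : ℝ :=
  deriv (margLogit β0 βx βw βxw γ0 γx) x

lemma one_add_exp_pos (t : ℝ) : 0 < 1 + Real.exp t := by positivity

lemma expit_pos (t : ℝ) : 0 < expit t := by unfold expit; positivity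

lemma expit_lt_one (t : ℝ) : expit t < 1 := by
  unfold expit
  rw [div_lt_one (one_add_exp_pos t)]
  linarith

lemma hasDerivAt_expit (t : ℝ) : HasDerivAt expit (expit t * (1 - expit t)) t := by
  have h1 : HasDerivAt (fun s : ℝ => Real.exp s) (Real.exp t) t := Real.hasDerivAt_exp t
  have h2 : HasDerivAt (fun s : ℝ => 1 + Real.exp s) (Real.exp t) t := h1.const_add 1
  have h := h1.div h2 (ne_of_gt (one_add_exp_pos t))
  refine h.congr_deriv ?_
  unfold expit
  have hne := ne_of_gt (one_add_exp_pos t)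
  field_simp

/-- the marginal success probability as an explicit mixture. -/
noncomputable def mfun (β0 βx βw βxw γ0 : ℝ) (x : ℝ) : ℝ :=
  expit γ0 * expit (β0 + βw + (βx + βxw) * x) + (1 - expit γ0) * expit (β0 + βx * x)

lemma mfun_pos (β0 βx βw βxw γ0 x : ℝ) : 0 < mfun β0 βx βw βxw γ0 x := by
  have hP0 := expit_pos γ0; have hP1 := expit_lt_one γ0
  have hA0 := expit_pos (β0 + βw + (βx + βxw) * x)
  have hB0 := expit_pos (β0 + βx * x)
  unfold mfun
  nlinarith

lemma mfun_lt_one (β0 βx βw βxw γ0 x : ℝ) : mfun β0 βx βw βxw γ0 x < 1 := by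
  have hP0 := expit_pos γ0; have hP1 := expit_lt_one γ0
  have hA0 := expit_pos (β0 + βw + (βx + βxw) * x)
  have hA1 := expit_lt_one (β0 + βw + (βx + βxw) * x)
  have hB0 := expit_pos (β0 + βx * x)
  have hB1 := expit_lt_one (β0 + βx * x)
  unfold mfun
  nlinarith

lemma margLogit_eq (β0 βx βw βxw γ0 : ℝ) (x : ℝ) :
    margLogit β0 βx βw βxw γ0 0 x =
      Real.log (mfun β0 βx βw βxw γ0 x) - Real.log (1 - mfun β0 βx βw βxw γ0 x) := by
  have hnum : pYgX β0 βx βw βxw γ0 0 x true = mfun β0 βx βw βxw γ0 x := by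
    simp only [pYgX, jnt, pY, pW, if_true, if_false, mfun]
    norm_num
    ring_nf
  have hden : pYgX β0 βx βw βxw γ0 0 x false = 1 - mfun β0 βx βw βxw γ0 x := by
    simp only [pYgX, jnt, pY, pW, if_true, if_false, mfun]
    norm_num
    ring_nf
  rw [margLogit, hnum, hden,
    Real.log_div (ne_of_gt (mfun_pos β0 βx βw βxw γ0 x))
      (ne_of_gt (by linarith [mfun_lt_one β0 βx βw βxw γ0 x]))]

/-- the derivative of the mixture. -/
noncomputable def mderiv (β0 βx βw βxw γ0 : ℝ) (x : ℝ) : ℝ :=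
  expit γ0 * (expit (β0 + βw + (βx + βxw) * x) * (1 - expit (β0 + βw + (βx + βxw) * x)) * (βx + βxw))
  + (1 - expit γ0) * (expit (β0 + βx * x) * (1 - expit (β0 + βx * x)) * βx)

lemma hasDerivAt_mfun (β0 βx βw βxw γ0 x : ℝ) :
    HasDerivAt (mfun β0 βx βw βxw γ0) (mderiv β0 βx βw βxw γ0 x) x := by
  have h1lin : HasDerivAt (fun t : ℝ => β0 + βw + (βx + βxw) * t) (βx + βxw) x := by
    simpa using ((hasDerivAt_id x).const_mul (βx + βxw)).const_add (β0 + βw)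
  have h0lin : HasDerivAt (fun t : ℝ => β0 + βx * t) βx x := by
    simpa using ((hasDerivAt_id x).const_mul βx).const_add β0
  have h1 := (hasDerivAt_expit (β0 + βw + (βx + βxw) * x)).comp x h1lin
  have h0 := (hasDerivAt_expit (β0 + βx * x)).comp x h0lin
  have := (h1.const_mul (expit γ0)).add (h0.const_mul (1 - expit γ0))
  exact (by simpa [mfun, mderiv, Function.comp, mul_assoc, Pi.add_def] using this :
    HasDerivAt (fun y => mfun β0 βx βw βxw γ0 y) (mderiv β0 βx βw βxw γ0 x) x)

lemma betaMarg_eq (β0 βx βw βxw γ0 x : ℝ) :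
    betaMarg β0 βx βw βxw γ0 0 x =
      mderiv β0 βx βw βxw γ0 x /
        (mfun β0 βx βw βxw γ0 x * (1 - mfun β0 βx βw βxw γ0 x)) := by
  have hfun : margLogit β0 βx βw βxw γ0 0 =
      fun t => Real.log (mfun β0 βx βw βxw γ0 t) - Real.log (1 - mfun β0 βx βw βxw γ0 t) :=
    funext (margLogit_eq β0 βx βw βxw γ0)
  have hm := hasDerivAt_mfun β0 βx βw βxw γ0 x
  have hm0 : mfun β0 βx βw βxw γ0 x ≠ 0 := ne_of_gt (mfun_pos β0 βx βw βxw γ0 x)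
  have hm1 : (1 : ℝ) - mfun β0 βx βw βxw γ0 x ≠ 0 :=
    ne_of_gt (by linarith [mfun_lt_one β0 βx βw βxw γ0 x])
  have hlog1 : HasDerivAt (fun t => Real.log (mfun β0 βx βw βxw γ0 t))
      (mderiv β0 βx βw βxw γ0 x / mfun β0 βx βw βxw γ0 x) x := hm.log hm0
  have hsub : HasDerivAt (fun t : ℝ => 1 - mfun β0 βx βw βxw γ0 t)
      (-(mderiv β0 βx βw βxw γ0 x)) x := by
    simpa [Pi.sub_def] using (hasDerivAt_const x (1:ℝ)).sub hm
  have hlog2 : HasDerivAt (fun t => Real.log (1 - mfun β0 βx βw βxw γ0 t))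
      (-(mderiv β0 βx βw βxw γ0 x) / (1 - mfun β0 βx βw βxw γ0 x)) x := hsub.log hm1
  have hF := hlog1.sub hlog2
  rw [betaMarg, hfun, (hlog1.fun_sub hlog2).deriv]
  have h0 : (0:ℝ) < mfun β0 βx βw βxw γ0 x := mfun_pos β0 βx βw βxw γ0 x
  have h1 : mfun β0 βx βw βxw γ0 x < 1 := mfun_lt_one β0 βx βw βxw γ0 x
  field_simp
  ring

/-- No effect reversal when `γx = 0` (i.e. `W ⊥ X`): if moreover `βxw = 0` and `βx ≥ 0`
then `0 ≤ β(x) ≤ βx`; more generally if `βx ≥ 0` and `βxw ≥ 0` then `β(x) ≥ 0`. -/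
theorem no_effect_reversal (β0 βx βw βxw γ0 γx : ℝ) (hγ : γx = 0) :
    (βxw = 0 → 0 ≤ βx →
      ∀ x : ℝ, 0 ≤ betaMarg β0 βx βw βxw γ0 γx x ∧ betaMarg β0 βx βw βxw γ0 γx x ≤ βx) ∧
    (0 ≤ βx → 0 ≤ βxw →
      ∀ x : ℝ, 0 ≤ betaMarg β0 βx βw βxw γ0 γx x) := by
  subst hγ
  have key : ∀ x, betaMarg β0 βx βw βxw γ0 0 x =
      mderiv β0 βx βw βxw γ0 x /
        (mfun β0 βx βw βxw γ0 x * (1 - mfun β0 βx βw βxw γ0 x)) := betaMarg_eq β0 βx βw βxw γ0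
  have hmain : ∀ x, 0 ≤ βx → 0 ≤ βxw → 0 ≤ betaMarg β0 βx βw βxw γ0 0 x := by
    intro x hbx hbxw
    rw [key x]
    have h0 := mfun_pos β0 βx βw βxw γ0 x
    have h1 := mfun_lt_one β0 βx βw βxw γ0 x
    have hP0 := expit_pos γ0; have hP1 := expit_lt_one γ0
    have hA0 := expit_pos (β0 + βw + (βx + βxw) * x)
    have hA1 := expit_lt_one (β0 + βw + (βx + βxw) * x)
    have hB0 := expit_pos (β0 + βx * x)
    have hB1 := expit_lt_one (β0 + βx * x)
    apply div_nonneg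
    · unfold mderiv
      have t1 : 0 ≤ expit (β0 + βw + (βx + βxw) * x) * (1 - expit (β0 + βw + (βx + βxw) * x)) * (βx + βxw) :=
        mul_nonneg (mul_nonneg hA0.le (by linarith)) (by linarith)
      have t0 : 0 ≤ expit (β0 + βx * x) * (1 - expit (β0 + βx * x)) * βx :=
        mul_nonneg (mul_nonneg hB0.le (by linarith)) hbx
      have := mul_nonneg hP0.le t1
      have := mul_nonneg (by linarith : (0:ℝ) ≤ 1 - expit γ0) t0
      linarith
    · exact (mul_pos h0 (by linarith)).le
  constructor
  · intro hbxw hbx x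
    refine ⟨hmain x hbx (le_of_eq hbxw.symm), ?_⟩
    rw [key x]
    subst hbxw
    have h0 := mfun_pos β0 βx βw 0 γ0 x
    have h1 := mfun_lt_one β0 βx βw 0 γ0 x
    have hP0 := expit_pos γ0; have hP1 := expit_lt_one γ0
    have hA0 := expit_pos (β0 + βw + (βx + 0) * x)
    have hA1 := expit_lt_one (β0 + βw + (βx + 0) * x)
    have hB0 := expit_pos (β0 + βx * x)
    have hB1 := expit_lt_one (β0 + βx * x)
    rw [div_le_iff₀ (mul_pos h0 (by linarith))]
    unfold mderiv mfun
    set P := expit γ0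
    set A := expit (β0 + βw + (βx + 0) * x)
    set B := expit (β0 + βx * x)
    nlinarith [mul_nonneg (mul_nonneg hbx (mul_nonneg hP0.le (by linarith : (0:ℝ) ≤ 1 - P))) (sq_nonneg (A - B))]
  · intro hbx hbxw x
    exact hmain x hbx hbxw
end

section
/- For binary X, Y and two binary mediators W1, W2 as above, the total marginal log cross-product ratio of Y and X satisfies log cpr(Y,X) = βx + βxw1 + βxw2 + (log RR_{W2|Y,X=0} − log RR_{W2|Y,X=1}) + (log RR_{W1|Y,W2=1,X=0} − log RR_{W1|Y,W2=1,X=1}). -/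
/-- `P(Y=1 | X=x, W1=w1, W2=w2)` under the hierarchical logistic model. -/
noncomputable def pY2 (β0 βx βw1 βxw1 βw2 βxw2 βw1w2 x w1 w2 : ℝ) : ℝ :=
  expit (β0 + βx * x + βw1 * w1 + βxw1 * x * w1 + βw2 * w2 + βxw2 * x * w2 + βw1w2 * w1 * w2)

/-- `P(W1=1 | X=x, W2=w2)` under the hierarchical logistic model. -/
noncomputable def pW1 (γ10 γ1x γ1w2 γ1xw2 x w2 : ℝ) : ℝ :=
  expit (γ10 + γ1x * x + γ1w2 * w2 + γ1xw2 * x * w2)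

/-- `P(W2=1 | X=x)` under the hierarchical logistic model. -/
noncomputable def pW2 (γ20 γ2x x : ℝ) : ℝ := expit (γ20 + γ2x * x)

/-- joint conditional probability `P(Y=y, W1=w1 | X=x, W2=w2)`. -/
noncomputable def jYW1 (β0 βx βw1 βxw1 βw2 βxw2 βw1w2 γ10 γ1x γ1w2 γ1xw2 x w2 : ℝ)
    (y w1 : Bool) : ℝ :=
  (if y then pY2 β0 βx βw1 βxw1 βw2 βxw2 βw1w2 x (if w1 then 1 else 0) w2
   else 1 - pY2 β0 βx βw1 βxw1 βw2 βxw2 βw1w2 x (if w1 then 1 else 0) w2) *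
  (if w1 then pW1 γ10 γ1x γ1w2 γ1xw2 x w2 else 1 - pW1 γ10 γ1x γ1w2 γ1xw2 x w2)

/-- marginal (over `W1`) log odds of `Y` given `X=x, W2=w2`. -/
noncomputable def Lgt (β0 βx βw1 βxw1 βw2 βxw2 βw1w2 γ10 γ1x γ1w2 γ1xw2 x w2 : ℝ) : ℝ :=
  Real.log ((jYW1 β0 βx βw1 βxw1 βw2 βxw2 βw1w2 γ10 γ1x γ1w2 γ1xw2 x w2 true true +
      jYW1 β0 βx βw1 βxw1 βw2 βxw2 βw1w2 γ10 γ1x γ1w2 γ1xw2 x w2 true false) /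
    (jYW1 β0 βx βw1 βxw1 βw2 βxw2 βw1w2 γ10 γ1x γ1w2 γ1xw2 x w2 false true +
      jYW1 β0 βx βw1 βxw1 βw2 βxw2 βw1w2 γ10 γ1x γ1w2 γ1xw2 x w2 false false))

/-- `log RR_{W1∣Y, X=x, W2=w2} = log [P(W1=1|Y=1,X=x,W2=w2) / P(W1=1|Y=0,X=x,W2=w2)]`. -/
noncomputable def logRRW1 (β0 βx βw1 βxw1 βw2 βxw2 βw1w2 γ10 γ1x γ1w2 γ1xw2 x w2 : ℝ) : ℝ :=
  Real.log ((jYW1 β0 βx βw1 βxw1 βw2 βxw2 βw1w2 γ10 γ1x γ1w2 γ1xw2 x w2 true true /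
      (jYW1 β0 βx βw1 βxw1 βw2 βxw2 βw1w2 γ10 γ1x γ1w2 γ1xw2 x w2 true true +
        jYW1 β0 βx βw1 βxw1 βw2 βxw2 βw1w2 γ10 γ1x γ1w2 γ1xw2 x w2 true false)) /
    (jYW1 β0 βx βw1 βxw1 βw2 βxw2 βw1w2 γ10 γ1x γ1w2 γ1xw2 x w2 false true /
      (jYW1 β0 βx βw1 βxw1 βw2 βxw2 βw1w2 γ10 γ1x γ1w2 γ1xw2 x w2 false true +
        jYW1 β0 βx βw1 βxw1 βw2 βxw2 βw1w2 γ10 γ1x γ1w2 γ1xw2 x w2 false false)))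

/-- joint conditional probability `P(Y=y, W1=w1, W2=w2 | X=x)`. -/
noncomputable def jFull (β0 βx βw1 βxw1 βw2 βxw2 βw1w2 γ10 γ1x γ1w2 γ1xw2 γ20 γ2x x : ℝ)
    (y w1 w2 : Bool) : ℝ :=
  jYW1 β0 βx βw1 βxw1 βw2 βxw2 βw1w2 γ10 γ1x γ1w2 γ1xw2 x (if w2 then 1 else 0) y w1 *
    (if w2 then pW2 γ20 γ2x x else 1 - pW2 γ20 γ2x x)

/-- marginal probability `P(Y=y | X=x)`, marginalizing over both mediators. -/
noncomputable def pYmarg (β0 βx βw1 βxw1 βw2 βxw2 βw1w2 γ10 γ1x γ1w2 γ1xw2 γ20 γ2x x : ℝ)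
    (y : Bool) : ℝ :=
  ∑ w1 : Bool, ∑ w2 : Bool,
    jFull β0 βx βw1 βxw1 βw2 βxw2 βw1w2 γ10 γ1x γ1w2 γ1xw2 γ20 γ2x x y w1 w2

/-- `log RR_{W2∣Y, X=x} = log [P(W2=1|Y=1,X=x)/P(W2=1|Y=0,X=x)]`. -/
noncomputable def logRRW2 (β0 βx βw1 βxw1 βw2 βxw2 βw1w2 γ10 γ1x γ1w2 γ1xw2 γ20 γ2x x : ℝ) : ℝ :=
  Real.log
    (((∑ w1 : Bool, jFull β0 βx βw1 βxw1 βw2 βxw2 βw1w2 γ10 γ1x γ1w2 γ1xw2 γ20 γ2x x true w1 true) /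
        pYmarg β0 βx βw1 βxw1 βw2 βxw2 βw1w2 γ10 γ1x γ1w2 γ1xw2 γ20 γ2x x true) /
     ((∑ w1 : Bool, jFull β0 βx βw1 βxw1 βw2 βxw2 βw1w2 γ10 γ1x γ1w2 γ1xw2 γ20 γ2x x false w1 true) /
        pYmarg β0 βx βw1 βxw1 βw2 βxw2 βw1w2 γ10 γ1x γ1w2 γ1xw2 γ20 γ2x x false))

/-- `log RR_{W1∣Y, W2=1, X=x} = log [P(W1=1|Y=1,W2=1,X=x)/P(W1=1|Y=0,W2=1,X=x)]`. -/
noncomputable def logRRW1cond (β0 βx βw1 βxw1 βw2 βxw2 βw1w2 γ10 γ1x γ1w2 γ1xw2 γ20 γ2x x : ℝ) : ℝ :=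
  Real.log
    ((jFull β0 βx βw1 βxw1 βw2 βxw2 βw1w2 γ10 γ1x γ1w2 γ1xw2 γ20 γ2x x true true true /
        (jFull β0 βx βw1 βxw1 βw2 βxw2 βw1w2 γ10 γ1x γ1w2 γ1xw2 γ20 γ2x x true true true +
         jFull β0 βx βw1 βxw1 βw2 βxw2 βw1w2 γ10 γ1x γ1w2 γ1xw2 γ20 γ2x x true false true)) /
     (jFull β0 βx βw1 βxw1 βw2 βxw2 βw1w2 γ10 γ1x γ1w2 γ1xw2 γ20 γ2x x false true true /
        (jFull β0 βx βw1 βxw1 βw2 βxw2 βw1w2 γ10 γ1x γ1w2 γ1xw2 γ20 γ2x x false true true +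
         jFull β0 βx βw1 βxw1 βw2 βxw2 βw1w2 γ10 γ1x γ1w2 γ1xw2 γ20 γ2x x false false true)))

lemma one_sub_expit_pos (t : ℝ) : 0 < 1 - expit t := by
  unfold expit
  have h : 0 < 1 + Real.exp t := by positivity
  rw [sub_pos, div_lt_one h]
  linarith

lemma one_sub_expit (t : ℝ) : 1 - expit t = 1 / (1 + Real.exp t) := by
  unfold expit
  have h : (1 + Real.exp t) ≠ 0 := by positivity
  field_simp
  ring

lemma log_odds_expit (t : ℝ) : Real.log (expit t) - Real.log (1 - expit t) = t := by
  have he : Real.exp t ≠ 0 := (Real.exp_pos t).ne'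
  have h : (1 + Real.exp t) ≠ 0 := by positivity
  rw [one_sub_expit, expit, Real.log_div he h, Real.log_div one_ne_zero h,
    Real.log_exp, Real.log_one]
  ring

lemma jYW1_pos (β0 βx βw1 βxw1 βw2 βxw2 βw1w2 γ10 γ1x γ1w2 γ1xw2 x w2 : ℝ)
    (y w1 : Bool) : 0 < jYW1 β0 βx βw1 βxw1 βw2 βxw2 βw1w2 γ10 γ1x γ1w2 γ1xw2 x w2 y w1 := by
  unfold jYW1 pY2 pW1
  cases y <;> cases w1 <;> simp <;>
    exact mul_pos (by first | exact expit_pos _ | exact one_sub_expit_pos _)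
      (by first | exact expit_pos _ | exact one_sub_expit_pos _)

lemma jFull_pos (β0 βx βw1 βxw1 βw2 βxw2 βw1w2 γ10 γ1x γ1w2 γ1xw2 γ20 γ2x x : ℝ)
    (y w1 w2 : Bool) :
    0 < jFull β0 βx βw1 βxw1 βw2 βxw2 βw1w2 γ10 γ1x γ1w2 γ1xw2 γ20 γ2x x y w1 w2 := by
  unfold jFull pW2
  cases w2 <;> simp <;>
    exact mul_pos (jYW1_pos _ _ _ _ _ _ _ _ _ _ _ _ _ _ _)
      (by first | exact expit_pos _ | exact one_sub_expit_pos _)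

lemma cpr_decomp (c p1t p1f p0t p0f S1t S1f S0t S0f j1t j1f j0t j0f : ℝ)
    (hp1t : 0 < p1t) (hp1f : 0 < p1f) (hp0t : 0 < p0t) (hp0f : 0 < p0f)
    (hS1t : 0 < S1t) (hS1f : 0 < S1f) (hS0t : 0 < S0t) (hS0f : 0 < S0f)
    (hj1t : 0 < j1t) (hj1f : 0 < j1f) (hj0t : 0 < j0t) (hj0f : 0 < j0f)
    (hcore : Real.log j1t - Real.log j1f - (Real.log j0t - Real.log j0f) = c) :
    Real.log (p1t * p0f / (p1f * p0t)) =
      c + (Real.log (S0t / p0t / (S0f / p0f)) - Real.log (S1t / p1t / (S1f / p1f)))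
        + (Real.log (j0t / S0t / (j0f / S0f)) - Real.log (j1t / S1t / (j1f / S1f))) := by
  rw [Real.log_div (mul_pos hp1t hp0f).ne' (mul_pos hp1f hp0t).ne',
      Real.log_mul hp1t.ne' hp0f.ne', Real.log_mul hp1f.ne' hp0t.ne',
      Real.log_div (div_pos hS0t hp0t).ne' (div_pos hS0f hp0f).ne',
      Real.log_div (div_pos hS1t hp1t).ne' (div_pos hS1f hp1f).ne',
      Real.log_div (div_pos hj0t hS0t).ne' (div_pos hj0f hS0f).ne',
      Real.log_div (div_pos hj1t hS1t).ne' (div_pos hj1f hS1f).ne',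
      Real.log_div hS0t.ne' hp0t.ne', Real.log_div hS0f.ne' hp0f.ne',
      Real.log_div hS1t.ne' hp1t.ne', Real.log_div hS1f.ne' hp1f.ne',
      Real.log_div hj0t.ne' hS0t.ne', Real.log_div hj0f.ne' hS0f.ne',
      Real.log_div hj1t.ne' hS1t.ne', Real.log_div hj1f.ne' hS1f.ne']
  linarith

/-- Total marginal log cross-product ratio of `Y` and `X` with two binary mediators. -/
theorem total_log_cpr_two_mediators
    (β0 βx βw1 βxw1 βw2 βxw2 βw1w2 γ10 γ1x γ1w2 γ1xw2 γ20 γ2x : ℝ) :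
    Real.log
      ((pYmarg β0 βx βw1 βxw1 βw2 βxw2 βw1w2 γ10 γ1x γ1w2 γ1xw2 γ20 γ2x 1 true *
        pYmarg β0 βx βw1 βxw1 βw2 βxw2 βw1w2 γ10 γ1x γ1w2 γ1xw2 γ20 γ2x 0 false) /
       (pYmarg β0 βx βw1 βxw1 βw2 βxw2 βw1w2 γ10 γ1x γ1w2 γ1xw2 γ20 γ2x 1 false *
        pYmarg β0 βx βw1 βxw1 βw2 βxw2 βw1w2 γ10 γ1x γ1w2 γ1xw2 γ20 γ2x 0 true))
      = βx + βxw1 + βxw2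
        + (logRRW2 β0 βx βw1 βxw1 βw2 βxw2 βw1w2 γ10 γ1x γ1w2 γ1xw2 γ20 γ2x 0
            - logRRW2 β0 βx βw1 βxw1 βw2 βxw2 βw1w2 γ10 γ1x γ1w2 γ1xw2 γ20 γ2x 1)
        + (logRRW1cond β0 βx βw1 βxw1 βw2 βxw2 βw1w2 γ10 γ1x γ1w2 γ1xw2 γ20 γ2x 0
            - logRRW1cond β0 βx βw1 βxw1 βw2 βxw2 βw1w2 γ10 γ1x γ1w2 γ1xw2 γ20 γ2x 1) := by
  have hJ : ∀ (x : ℝ) (y w1 w2 : Bool),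
      0 < jFull β0 βx βw1 βxw1 βw2 βxw2 βw1w2 γ10 γ1x γ1w2 γ1xw2 γ20 γ2x x y w1 w2 :=
    fun x y w1 w2 => jFull_pos _ _ _ _ _ _ _ _ _ _ _ _ _ _ _ _ _
  have hdiff : ∀ x : ℝ,
      Real.log (jFull β0 βx βw1 βxw1 βw2 βxw2 βw1w2 γ10 γ1x γ1w2 γ1xw2 γ20 γ2x x true true true)
        - Real.log (jFull β0 βx βw1 βxw1 βw2 βxw2 βw1w2 γ10 γ1x γ1w2 γ1xw2 γ20 γ2x x false true true)
      = β0 + βx * x + βw1 * 1 + βxw1 * x * 1 + βw2 * 1 + βxw2 * x * 1 + βw1w2 * 1 * 1 := by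
    intro x
    have h1 : 0 < pW1 γ10 γ1x γ1w2 γ1xw2 x 1 := expit_pos _
    have h2 : 0 < pW2 γ20 γ2x x := expit_pos _
    have hpy : 0 < pY2 β0 βx βw1 βxw1 βw2 βxw2 βw1w2 x 1 1 := expit_pos _
    have hpy' : 0 < 1 - pY2 β0 βx βw1 βxw1 βw2 βxw2 βw1w2 x 1 1 := one_sub_expit_pos _
    show Real.log (pY2 β0 βx βw1 βxw1 βw2 βxw2 βw1w2 x 1 1 * pW1 γ10 γ1x γ1w2 γ1xw2 x 1
        * pW2 γ20 γ2x x)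
      - Real.log ((1 - pY2 β0 βx βw1 βxw1 βw2 βxw2 βw1w2 x 1 1) * pW1 γ10 γ1x γ1w2 γ1xw2 x 1
        * pW2 γ20 γ2x x) = _
    rw [Real.log_mul (mul_pos hpy h1).ne' h2.ne', Real.log_mul hpy.ne' h1.ne',
        Real.log_mul (mul_pos hpy' h1).ne' h2.ne', Real.log_mul hpy'.ne' h1.ne']
    have := log_odds_expit (β0 + βx * x + βw1 * 1 + βxw1 * x * 1 + βw2 * 1 + βxw2 * x * 1
      + βw1w2 * 1 * 1)
    unfold pY2 at *
    linarith
  have hcore :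
      Real.log (jFull β0 βx βw1 βxw1 βw2 βxw2 βw1w2 γ10 γ1x γ1w2 γ1xw2 γ20 γ2x 1 true true true)
        - Real.log (jFull β0 βx βw1 βxw1 βw2 βxw2 βw1w2 γ10 γ1x γ1w2 γ1xw2 γ20 γ2x 1 false true true)
      - (Real.log (jFull β0 βx βw1 βxw1 βw2 βxw2 βw1w2 γ10 γ1x γ1w2 γ1xw2 γ20 γ2x 0 true true true)
        - Real.log (jFull β0 βx βw1 βxw1 βw2 βxw2 βw1w2 γ10 γ1x γ1w2 γ1xw2 γ20 γ2x 0 false true true))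
      = βx + βxw1 + βxw2 := by
    rw [hdiff 1, hdiff 0]; ring
  simp only [logRRW2, logRRW1cond, pYmarg, Fintype.sum_bool]
  exact cpr_decomp _ _ _ _ _ _ _ _ _ _ _ _ _
    (add_pos (add_pos (hJ 1 true true true) (hJ 1 true true false))
      (add_pos (hJ 1 true false true) (hJ 1 true false false)))
    (add_pos (add_pos (hJ 1 false true true) (hJ 1 false true false))
      (add_pos (hJ 1 false false true) (hJ 1 false false false)))
    (add_pos (add_pos (hJ 0 true true true) (hJ 0 true true false))
      (add_pos (hJ 0 true false true) (hJ 0 true false false)))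
    (add_pos (add_pos (hJ 0 false true true) (hJ 0 false true false))
      (add_pos (hJ 0 false false true) (hJ 0 false false false)))
    (add_pos (hJ 1 true true true) (hJ 1 true false true))
    (add_pos (hJ 1 false true true) (hJ 1 false false true))
    (add_pos (hJ 0 true true true) (hJ 0 true false true))
    (add_pos (hJ 0 false true true) (hJ 0 false false true))
    (hJ 1 true true true) (hJ 1 false true true) (hJ 0 true true true) (hJ 0 false true true)
    hcore
end
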